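/- Braid relation for the bowling-ball matrices: for every index i with 1 ≤ i ≤ n−2, one has M_i · M_{i+1} · M_i = M_{i+1} · M_i · M_{i+1}. -/
import Mathlib


open Matrix

/-- The tuple `u` with the entries in positions `i` and `i+1` interchanged
(0-indexed; returns `u` unchanged if `i+1` is out of range). -/
def swapTup (n N : ℕ) (i : ℕ) (u : Fin n → Fin (N + 1)) : Fin n → Fin (N + 1) :=
  if h : i + 1 < n then u ∘ Equiv.swap ⟨i, Nat.lt_of_succ_lt h⟩ ⟨i + 1, h⟩ else u


section Aux
variable {n N : ℕ}

lemma swapTup_apply {i : ℕ} (h : i + 1 < n) (u : Fin n → Fin (N+1)) (x : Fin n) :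
    swapTup n N i u x = u (Equiv.swap ⟨i, Nat.lt_of_succ_lt h⟩ ⟨i + 1, h⟩ x) := by
  rw [swapTup, dif_pos h]; rfl

lemma swapTup_left {i : ℕ} (h : i + 1 < n) (u : Fin n → Fin (N+1)) :
    swapTup n N i u ⟨i, Nat.lt_of_succ_lt h⟩ = u ⟨i + 1, h⟩ := by
  rw [swapTup_apply h, Equiv.swap_apply_left]

lemma swapTup_right {i : ℕ} (h : i + 1 < n) (u : Fin n → Fin (N+1)) :
    swapTup n N i u ⟨i + 1, h⟩ = u ⟨i, Nat.lt_of_succ_lt h⟩ := by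
  rw [swapTup_apply h, Equiv.swap_apply_right]

lemma swapTup_other {i : ℕ} (h : i + 1 < n) (u : Fin n → Fin (N+1)) (x : Fin n)
    (h1 : x.val ≠ i) (h2 : x.val ≠ i + 1) : swapTup n N i u x = u x := by
  rw [swapTup_apply h, Equiv.swap_apply_of_ne_of_ne]
  · exact fun hx => h1 (by simpa using congrArg Fin.val hx)
  · exact fun hx => h2 (by simpa using congrArg Fin.val hx)

lemma swapTup_swapTup {i : ℕ} (h : i + 1 < n) (u : Fin n → Fin (N+1)) :
    swapTup n N i (swapTup n N i u) = u := by
  funext x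
  rw [swapTup_apply h, swapTup_apply h, Equiv.swap_apply_self]

lemma swapTup_braid {i : ℕ} (h : i + 2 < n) (u : Fin n → Fin (N+1)) :
    swapTup n N (i+1) (swapTup n N i (swapTup n N (i+1) u)) =
      swapTup n N i (swapTup n N (i+1) (swapTup n N i u)) := by
  have h1 : i + 1 < n := by omega
  have h2 : i + 1 + 1 < n := by omega
  funext x
  rw [swapTup_apply h2, swapTup_apply h1, swapTup_apply h2,
      swapTup_apply h1, swapTup_apply h2, swapTup_apply h1]
  congr 1
  set a : Fin n := ⟨i, by omega⟩
  set b : Fin n := ⟨i+1, by omega⟩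
  set c : Fin n := ⟨i+1+1, h2⟩
  have hab : a ≠ b := by simp [a, b, Fin.ext_iff]
  have hbc : b ≠ c := by simp [b, c, Fin.ext_iff]
  have hac : a ≠ c := by simp [a, c, Fin.ext_iff]; omega
  show Equiv.swap b c ((Equiv.swap a b) ((Equiv.swap b c) x)) =
    Equiv.swap a b ((Equiv.swap b c) ((Equiv.swap a b) x))
  rcases eq_or_ne x a with rfl | hxa
  · simp [Equiv.swap_apply_of_ne_of_ne, hab, hbc, hac, hab.symm, hbc.symm, hac.symm]
  rcases eq_or_ne x b with rfl | hxb
  · simp [Equiv.swap_apply_of_ne_of_ne, hab, hbc, hac, hab.symm, hbc.symm, hac.symm]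
  rcases eq_or_ne x c with rfl | hxc
  · simp [Equiv.swap_apply_of_ne_of_ne, hab, hbc, hac, hab.symm, hbc.symm, hac.symm]
  · simp [Equiv.swap_apply_of_ne_of_ne, hxa, hxb, hxc]

lemma swapTup_eq_self {i : ℕ} (h : i + 1 < n) (u : Fin n → Fin (N+1))
    (hu : u ⟨i, Nat.lt_of_succ_lt h⟩ = u ⟨i + 1, h⟩) : swapTup n N i u = u := by
  funext x
  rcases eq_or_ne x.val i with hx | hx
  · have : x = ⟨i, Nat.lt_of_succ_lt h⟩ := Fin.ext hx
    rw [this, swapTup_left h, hu]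
  rcases eq_or_ne x.val (i+1) with hx2 | hx2
  · have : x = ⟨i+1, h⟩ := Fin.ext hx2
    rw [this, swapTup_right h, hu]
  · exact swapTup_other h u x hx hx2

end Aux

/-- Jones's bowling-ball matrix `M_i` (0-indexed: `i` ranges over `0,…,n-2`,
corresponding to the lanes `i+1` and `i+2` in 1-indexed notation; it is the
identity matrix out of range).  Rows and columns are indexed by the tuples
`u : Fin n → Fin (N+1)` recording the number of balls in each lane:
`M_i e_u = e_{s_i u}` if `u i ≤ u (i+1)`, and
`M_i e_u = q • e_{s_i u} + (1-q) • e_u` if `u i > u (i+1)`. -/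
def bowlM (F : Type*) [Field F] (q : F) (n N : ℕ) (i : ℕ) :
    Matrix (Fin n → Fin (N + 1)) (Fin n → Fin (N + 1)) F :=
  if h : i + 1 < n then
    Matrix.of fun v u =>
      if u ⟨i, Nat.lt_of_succ_lt h⟩ ≤ u ⟨i + 1, h⟩ then
        (if v = swapTup n N i u then 1 else 0)
      else
        q * (if v = swapTup n N i u then 1 else 0) + (1 - q) * (if v = u then 1 else 0)
  else 1


section Aux2
variable {F : Type*} [Field F] {q : F} {n N : ℕ}

lemma mul_col {I : Type*} [Fintype I] [DecidableEq I] (M Nm : Matrix I I F) (u x : I) (a b : F)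
    (h : ∀ w, Nm w u = a * (if w = x then 1 else 0) + b * (if w = u then 1 else 0)) (v : I) :
    (M * Nm) v u = a * M v x + b * M v u := by
  simp only [Matrix.mul_apply, h, mul_add, mul_ite, mul_one, mul_zero,
    Finset.sum_add_distrib]
  rw [Finset.sum_ite_eq' Finset.univ x, Finset.sum_ite_eq' Finset.univ u]
  simp [mul_comm]

lemma bowlM_col {i : ℕ} (h : i + 1 < n) (u w : Fin n → Fin (N+1)) :
    bowlM F q n N i w u =
      (if u ⟨i, Nat.lt_of_succ_lt h⟩ ≤ u ⟨i + 1, h⟩ then (1:F) else q) *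
        (if w = swapTup n N i u then 1 else 0) +
      (if u ⟨i, Nat.lt_of_succ_lt h⟩ ≤ u ⟨i + 1, h⟩ then (0:F) else 1 - q) *
        (if w = u then 1 else 0) := by
  rw [bowlM, dif_pos h]
  dsimp only [Matrix.of_apply]
  split <;> ring

end Aux2

section Aux3
variable {F : Type*} [Field F] {q : F} {n N : ℕ}

lemma s0_c {i : ℕ} (h2 : i + 1 + 1 < n) (u : Fin n → Fin (N+1)) :
    swapTup n N i u ⟨i + 1 + 1, h2⟩ = u ⟨i + 1 + 1, h2⟩ :=
  swapTup_other (by omega) u _ (show i+1+1 ≠ i by omega) (show i+1+1 ≠ i+1 by omega)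

lemma s1_a {i : ℕ} (h2 : i + 1 + 1 < n) (u : Fin n → Fin (N+1)) :
    swapTup n N (i+1) u ⟨i, by omega⟩ = u ⟨i, by omega⟩ :=
  swapTup_other h2 u _ (show i ≠ i+1 by omega) (show i ≠ i+1+1 by omega)

lemma braid_collapse {i : ℕ} (h : i + 2 < n) (u : Fin n → Fin (N+1))
    (hu : u ⟨i + 1, by omega⟩ = u ⟨i + 1 + 1, by omega⟩) :
    swapTup n N i (swapTup n N (i+1) (swapTup n N i u)) =
      swapTup n N (i+1) (swapTup n N i u) := by
  have h2 : i + 1 + 1 < n := by omega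
  rw [← swapTup_braid h u, swapTup_eq_self h2 u hu]

lemma triple_col {I : Type*} [Fintype I] [DecidableEq I] (P Q R : Matrix I I F)
    (fP fQ fR : I → I) (aP bP aQ bQ aR bR : I → F)
    (hP : ∀ u w, P w u = aP u * (if w = fP u then 1 else 0) + bP u * (if w = u then 1 else 0))
    (hQ : ∀ u w, Q w u = aQ u * (if w = fQ u then 1 else 0) + bQ u * (if w = u then 1 else 0))
    (hR : ∀ u w, R w u = aR u * (if w = fR u then 1 else 0) + bR u * (if w = u then 1 else 0))
    (v u : I) :
    (P * Q * R) v u =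
      aR u * (aQ (fR u) * (aP (fQ (fR u)) * (if v = fP (fQ (fR u)) then 1 else 0)
                        + bP (fQ (fR u)) * (if v = fQ (fR u) then 1 else 0))
            + bQ (fR u) * (aP (fR u) * (if v = fP (fR u) then 1 else 0)
                        + bP (fR u) * (if v = fR u then 1 else 0)))
    + bR u * (aQ u * (aP (fQ u) * (if v = fP (fQ u) then 1 else 0)
                    + bP (fQ u) * (if v = fQ u then 1 else 0))
            + bQ u * (aP u * (if v = fP u then 1 else 0)
                    + bP u * (if v = u then 1 else 0))) := by
  rw [mul_col (P*Q) R u (fR u) (aR u) (bR u) (hR u) v,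
      mul_col P Q (fR u) (fQ (fR u)) (aQ (fR u)) (bQ (fR u)) (hQ (fR u)) v,
      mul_col P Q u (fQ u) (aQ u) (bQ u) (hQ u) v,
      hP (fQ (fR u)) v, hP (fR u) v, hP (fQ u) v, hP u v]

end Aux3

set_option maxHeartbeats 2000000 in
/-- **Braid relation for the bowling-ball matrices.**
For every index `i` (0-indexed, so `i+2 < n` corresponds to
`1 ≤ i ≤ n-2` in 1-indexed notation),
`M_i · M_{i+1} · M_i = M_{i+1} · M_i · M_{i+1}`. -/
theorem bowlM_braid_relation (F : Type*) [Field F] (q : F) (n N : ℕ)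
    (hn : 2 ≤ n) (hN : 1 ≤ N) (i : ℕ) (hi : i + 2 < n) :
    bowlM F q n N i * bowlM F q n N (i + 1) * bowlM F q n N i =
      bowlM F q n N (i + 1) * bowlM F q n N i * bowlM F q n N (i + 1) := by
  have h1' : i + 1 < n := by omega
  have h2' : i + 1 + 1 < n := by omega
  ext v u
  rw [triple_col (bowlM F q n N i) (bowlM F q n N (i+1)) (bowlM F q n N i)
        (swapTup n N i) (swapTup n N (i+1)) (swapTup n N i)
        (fun u => if u ⟨i, Nat.lt_of_succ_lt h1'⟩ ≤ u ⟨i+1, h1'⟩ then (1:F) else q)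
        (fun u => if u ⟨i, Nat.lt_of_succ_lt h1'⟩ ≤ u ⟨i+1, h1'⟩ then (0:F) else 1 - q)
        (fun u => if u ⟨i+1, Nat.lt_of_succ_lt h2'⟩ ≤ u ⟨i+1+1, h2'⟩ then (1:F) else q)
        (fun u => if u ⟨i+1, Nat.lt_of_succ_lt h2'⟩ ≤ u ⟨i+1+1, h2'⟩ then (0:F) else 1 - q)
        (fun u => if u ⟨i, Nat.lt_of_succ_lt h1'⟩ ≤ u ⟨i+1, h1'⟩ then (1:F) else q)
        (fun u => if u ⟨i, Nat.lt_of_succ_lt h1'⟩ ≤ u ⟨i+1, h1'⟩ then (0:F) else 1 - q)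
        (fun u w => bowlM_col h1' u w) (fun u w => bowlM_col h2' u w)
        (fun u w => bowlM_col h1' u w) v u,
      triple_col (bowlM F q n N (i+1)) (bowlM F q n N i) (bowlM F q n N (i+1))
        (swapTup n N (i+1)) (swapTup n N i) (swapTup n N (i+1))
        (fun u => if u ⟨i+1, Nat.lt_of_succ_lt h2'⟩ ≤ u ⟨i+1+1, h2'⟩ then (1:F) else q)
        (fun u => if u ⟨i+1, Nat.lt_of_succ_lt h2'⟩ ≤ u ⟨i+1+1, h2'⟩ then (0:F) else 1 - q)
        (fun u => if u ⟨i, Nat.lt_of_succ_lt h1'⟩ ≤ u ⟨i+1, h1'⟩ then (1:F) else q)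
        (fun u => if u ⟨i, Nat.lt_of_succ_lt h1'⟩ ≤ u ⟨i+1, h1'⟩ then (0:F) else 1 - q)
        (fun u => if u ⟨i+1, Nat.lt_of_succ_lt h2'⟩ ≤ u ⟨i+1+1, h2'⟩ then (1:F) else q)
        (fun u => if u ⟨i+1, Nat.lt_of_succ_lt h2'⟩ ≤ u ⟨i+1+1, h2'⟩ then (0:F) else 1 - q)
        (fun u w => bowlM_col h2' u w) (fun u w => bowlM_col h1' u w)
        (fun u w => bowlM_col h2' u w) v u]
  rcases lt_trichotomy (u ⟨i, Nat.lt_of_succ_lt h1'⟩) (u ⟨i+1, h1'⟩) with hxy|hxy|hxy <;>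
  rcases lt_trichotomy (u ⟨i+1, Nat.lt_of_succ_lt h2'⟩) (u ⟨i+1+1, h2'⟩) with hyz|hyz|hyz <;>
  rcases lt_trichotomy (u ⟨i, Nat.lt_of_succ_lt h1'⟩) (u ⟨i+1+1, h2'⟩) with hxz|hxz|hxz <;>
  (try have lxy := hxy.le) <;> (try have nxy := hxy.not_ge) <;> (try have gxy := hxy.ge) <;>
  (try have lyz := hyz.le) <;> (try have nyz := hyz.not_ge) <;> (try have gyz := hyz.ge) <;>
  (try have lxz := hxz.le) <;> (try have nxz := hxz.not_ge) <;> (try have gxz := hxz.ge) <;>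
  first
  | fin_omega
  | (simp only [swapTup_left h1', swapTup_right h1', swapTup_left h2', swapTup_right h2',
      s0_c h2', s1_a h2', swapTup_swapTup h1', swapTup_swapTup h2', swapTup_braid hi,
      braid_collapse hi, swapTup_eq_self h1', swapTup_eq_self h2', if_true, if_false, le_refl, *]
     first | ring | trace_state)
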